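/- Let M be a compact topological space and φ : ℝ → M → M a continuous flow on M. Let Σ_u and Σ_s be compact subsets of M and V_u ⊇ Σ_u, V_s ⊇ Σ_s open sets such that φ t (V_s) ⊆ V_s for all t ≥ 0, and such that for every ρ ∉ Σ_u and every open set U ⊇ Σ_s, φ t ρ ∈ U for all sufficiently large t. Then there exists τ ≥ 0 such that for every ρ ∈ M and all real numbers t₁ ≤ t₂, if φ t₁ ρ ∉ V_u ∪ V_s and φ t₂ ρ ∉ V_u ∪ V_s, then t₂ − t₁ ≤ τ. (In other words, τ is a uniform upper bound for the travel time of any trajectory through the region M \ (V_u ∪ V_s).) -/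
import Mathlib


open Set Filter

theorem stmt_1 {M : Type*} [TopologicalSpace M] [CompactSpace M]
    (φ : ℝ → M → M) (hφ0 : φ 0 = id)
    (hφadd : ∀ (s t : ℝ) (x : M), φ (s + t) x = φ s (φ t x))
    (hφcont : Continuous fun p : ℝ × M => φ p.1 p.2)
    (Su Ss : Set M) (hSu : IsCompact Su) (hSs : IsCompact Ss)
    (Vu Vs : Set M) (hVu : IsOpen Vu) (hVs : IsOpen Vs)
    (hVuS : Su ⊆ Vu) (hVsS : Ss ⊆ Vs)
    (hinv : ∀ t : ℝ, 0 ≤ t → ∀ x ∈ Vs, φ t x ∈ Vs)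
    (hfwd : ∀ ρ ∉ Su, ∀ U : Set M, IsOpen U → Ss ⊆ U → ∀ᶠ t in atTop, φ t ρ ∈ U) :
    ∃ τ : ℝ, 0 ≤ τ ∧ ∀ (ρ : M) (t₁ t₂ : ℝ), t₁ ≤ t₂ →
      φ t₁ ρ ∉ Vu ∪ Vs → φ t₂ ρ ∉ Vu ∪ Vs → t₂ - t₁ ≤ τ := by
  classical
  set K : Set M := (Vu ∪ Vs)ᶜ with hK
  have hKc : IsCompact K := (hVu.union hVs).isClosed_compl.isCompact
  have hchoice : ∀ x ∈ K, ∃ T : ℝ, 0 ≤ T ∧ φ T x ∈ Vs := by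
    intro x hx
    have hxSu : x ∉ Su := fun h => hx (Or.inl (hVuS h))
    have h := hfwd x hxSu Vs hVs hVsS
    rcases (h.and (eventually_ge_atTop 0)).exists with ⟨T, hT1, hT2⟩
    exact ⟨T, hT2, hT1⟩
  choose! T hT0 hTVs using hchoice
  have hUopen : ∀ x : M, IsOpen {y | φ (T x) y ∈ Vs} := by
    intro x
    have : Continuous fun y => φ (T x) y :=
      hφcont.comp (continuous_const.prodMk continuous_id)
    exact hVs.preimage this
  obtain ⟨s, hsK, hscov⟩ := hKc.elim_nhds_subcover (fun x => {y | φ (T x) y ∈ Vs})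
    (fun x hx => (hUopen x).mem_nhds (hTVs x hx))
  refine ⟨s.fold max 0 T, ?_, ?_⟩
  · exact (Finset.le_fold_max (0:ℝ)).2 (Or.inl le_rfl)
  · intro ρ t₁ t₂ hle h1 h2
    by_contra hgt
    push_neg at hgt
    -- φ t₁ ρ ∈ K, so it lies in some U x with x ∈ s
    have h1K : φ t₁ ρ ∈ K := h1
    rcases mem_iUnion₂.1 (hscov h1K) with ⟨x, hxs, hx⟩
    have hTx : T x ≤ s.fold max 0 T := (Finset.le_fold_max (T x)).2 (Or.inr ⟨x, hxs, le_rfl⟩)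
    have hnn : 0 ≤ t₂ - t₁ - T x := by linarith
    have : φ t₂ ρ ∈ Vs := by
      have key : φ t₂ ρ = φ (t₂ - t₁ - T x) (φ (T x) (φ t₁ ρ)) := by
        rw [← hφadd, ← hφadd]
        congr 1
        ring
      rw [key]
      exact hinv _ hnn _ hx
    exact h2 (Or.inr this)
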